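/- Let 0 < ξ̄, let f : ℝ → ℝ be continuous with f > 0 on (0, ξ̄), f ≥ 0 and ∫_0^{ξ̄} f(ξ) dξ = 1, let F(t) := ∫_0^t f(ξ) dξ, and define G(t) := ∫_0^t ξ f(ξ) dξ + t ∫_t^{ξ̄} f(ξ) dξ for t ∈ [0, ξ̄]. Fix reals 0 ≤ c < w, a resource B with 0 < B ≤ ξ̄, a price p ∈ ℝ, and define the APO's payoff V(x) := (w − c)·( G(B − x) − G(B) ) + (p − c)·x for x ∈ [0, B], and the critical price c̃ := c + (w − c)·(1 − F(B)). Then: (i) if p < c̃, then x = 0 is the unique maximizer of V on [0, B]; (ii) if c̃ ≤ p ≤ w, then x* := B − t* maximizes V on [0, B], where t* is the unique t ∈ [0, ξ̄] with F(t) = (w − p)/(w − c); (iii) if p > w, then x = B is the unique maximizer of V on [0, B]. (APO's optimal decision in the Stackelberg game: the amount of resource the APO dedicates to offloading given the MNO's linear price p.) -/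

import Mathlib

open MeasureTheory intervalIntegral Set


/-- The cumulative distribution function `F(t) = ∫_0^t f`. -/
noncomputable def Ffun (f : ℝ → ℝ) (t : ℝ) : ℝ := ∫ ξ in (0 : ℝ)..t, f ξ

/-- The expected served own demand `G(t) = ∫_0^t ξ f(ξ) dξ + t ∫_t^{ξ̄} f`. -/
noncomputable def Gfun (ξmax : ℝ) (f : ℝ → ℝ) (t : ℝ) : ℝ :=
  (∫ ξ in (0 : ℝ)..t, ξ * f ξ) + t * ∫ ξ in t..ξmax, f ξ

/-- The APO's payoff from dedicating `x` units of resource to offloading at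
unit price `p`: `V(x) = (w − c)(G(B − x) − G(B)) + (p − c)x`. -/
noncomputable def Vfun (ξmax : ℝ) (f : ℝ → ℝ) (w c B p x : ℝ) : ℝ :=
  (w - c) * (Gfun ξmax f (B - x) - Gfun ξmax f B) + (p - c) * x

lemma Ffun_hasDerivAt (f : ℝ → ℝ) (hfc : Continuous f) (t : ℝ) :
    HasDerivAt (Ffun f) (f t) t :=
  integral_hasDerivAt_right (hfc.intervalIntegrable _ _)
    (hfc.stronglyMeasurableAtFilter _ _) hfc.continuousAt

lemma Ffun_continuous (f : ℝ → ℝ) (hfc : Continuous f) : Continuous (Ffun f) :=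
  continuous_iff_continuousAt.2 fun t =>
    (Ffun_hasDerivAt f hfc t).differentiableAt.continuousAt

lemma Ffun_sub (f : ℝ → ℝ) (hfc : Continuous f) (a b : ℝ) :
    Ffun f b - Ffun f a = ∫ ξ in a..b, f ξ := by
  unfold Ffun
  rw [integral_interval_sub_left (hfc.intervalIntegrable _ _) (hfc.intervalIntegrable _ _)]

lemma Ffun_mono (f : ℝ → ℝ) (hfc : Continuous f) (hfnn : ∀ ξ : ℝ, 0 ≤ f ξ) :
    Monotone (Ffun f) := by
  intro a b hab
  have h1 : (0:ℝ) ≤ ∫ ξ in a..b, f ξ :=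
    intervalIntegral.integral_nonneg hab fun x _ => hfnn x
  have h2 := Ffun_sub f hfc a b
  linarith

lemma Ffun_strict (ξmax : ℝ) (f : ℝ → ℝ) (hfc : Continuous f)
    (hfpos : ∀ ξ ∈ Set.Ioo (0 : ℝ) ξmax, 0 < f ξ)
    {a b : ℝ} (ha : 0 ≤ a) (hb : b ≤ ξmax) (hab : a < b) : Ffun f a < Ffun f b := by
  have hpos : (0:ℝ) < ∫ ξ in a..b, f ξ :=
    intervalIntegral_pos_of_pos_on (hfc.intervalIntegrable a b)
      (fun x hx => hfpos x ⟨lt_of_le_of_lt ha hx.1, lt_of_lt_of_le hx.2 hb⟩) hab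
  have h2 := Ffun_sub f hfc a b
  linarith

lemma Gfun_hasDerivAt (ξmax : ℝ) (f : ℝ → ℝ) (hfc : Continuous f)
    (hnorm : (∫ ξ in (0 : ℝ)..ξmax, f ξ) = 1) (t : ℝ) :
    HasDerivAt (Gfun ξmax f) (1 - Ffun f t) t := by
  have hidf : Continuous fun ξ : ℝ => ξ * f ξ := continuous_id.mul hfc
  have h1 : HasDerivAt (fun u : ℝ => ∫ ξ in (0:ℝ)..u, ξ * f ξ) (t * f t) t :=
    integral_hasDerivAt_right (hidf.intervalIntegrable _ _)
      (hidf.stronglyMeasurableAtFilter _ _) hidf.continuousAt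
  have h2 : HasDerivAt (fun u : ℝ => ∫ ξ in u..ξmax, f ξ) (-f t) t :=
    integral_hasDerivAt_left (hfc.intervalIntegrable _ _)
      (hfc.stronglyMeasurableAtFilter _ _) hfc.continuousAt
  have h3 : HasDerivAt (fun u : ℝ => u * ∫ ξ in u..ξmax, f ξ)
      (1 * (∫ ξ in t..ξmax, f ξ) + t * -f t) t := (hasDerivAt_id t).mul h2
  have h4 := h1.add h3
  have hC : (∫ ξ in t..ξmax, f ξ) = 1 - Ffun f t := by
    have := Ffun_sub f hfc t ξmax
    have hFmax : Ffun f ξmax = 1 := hnorm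
    linarith
  have : t * f t + (1 * (∫ ξ in t..ξmax, f ξ) + t * -f t) = 1 - Ffun f t := by
    rw [hC]; ring
  rw [this] at h4
  exact h4

lemma Vfun_hasDerivAt (ξmax : ℝ) (f : ℝ → ℝ) (hfc : Continuous f)
    (hnorm : (∫ ξ in (0 : ℝ)..ξmax, f ξ) = 1) (w c B p x : ℝ) :
    HasDerivAt (Vfun ξmax f w c B p)
      ((p - c) - (w - c) * (1 - Ffun f (B - x))) x := by
  have hBx : HasDerivAt (fun x : ℝ => B - x) (-1) x := (hasDerivAt_id x).const_sub B
  have hGcomp : HasDerivAt (fun x : ℝ => Gfun ξmax f (B - x))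
      ((1 - Ffun f (B - x)) * (-1)) x :=
    (Gfun_hasDerivAt ξmax f hfc hnorm (B - x)).comp x hBx
  have h := ((hGcomp.sub_const (Gfun ξmax f B)).const_mul (w - c)).add
    ((hasDerivAt_id x).const_mul (p - c))
  have heq : (w - c) * ((1 - Ffun f (B - x)) * (-1)) + (p - c) * 1
      = (p - c) - (w - c) * (1 - Ffun f (B - x)) := by ring
  rw [heq] at h
  exact h

/-- The APO's optimal decision in the Stackelberg game, with critical price
`c̃ = c + (w − c)(1 − F(B))`: (i) if `p < c̃` the unique maximizer of `V` on
`[0, B]` is `0`; (ii) if `c̃ ≤ p ≤ w` then `B − t*` maximizes `V`, where `t*` is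
the unique `t ∈ [0, ξ̄]` with `F(t) = (w − p)/(w − c)`; (iii) if `p > w` the
unique maximizer is `B`. -/
theorem APO_optimal_decision (ξmax : ℝ) (hξ : 0 < ξmax)
    (f : ℝ → ℝ) (hfc : Continuous f)
    (hfpos : ∀ ξ ∈ Set.Ioo (0 : ℝ) ξmax, 0 < f ξ)
    (hfnn : ∀ ξ : ℝ, 0 ≤ f ξ)
    (hnorm : (∫ ξ in (0 : ℝ)..ξmax, f ξ) = 1)
    (c w : ℝ) (hc : 0 ≤ c) (hcw : c < w)
    (B : ℝ) (hB0 : 0 < B) (hBξ : B ≤ ξmax) (p : ℝ) :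
    (p < c + (w - c) * (1 - Ffun f B) →
      ∀ x ∈ Set.Icc (0 : ℝ) B, x ≠ 0 →
        Vfun ξmax f w c B p x < Vfun ξmax f w c B p 0) ∧
    (c + (w - c) * (1 - Ffun f B) ≤ p → p ≤ w →
      ∃ tstar ∈ Set.Icc (0 : ℝ) ξmax,
        Ffun f tstar = (w - p) / (w - c) ∧
        (∀ t ∈ Set.Icc (0 : ℝ) ξmax, Ffun f t = (w - p) / (w - c) → t = tstar) ∧
        ∀ x ∈ Set.Icc (0 : ℝ) B,
          Vfun ξmax f w c B p x ≤ Vfun ξmax f w c B p (B - tstar)) ∧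
    (w < p →
      ∀ x ∈ Set.Icc (0 : ℝ) B, x ≠ B →
        Vfun ξmax f w c B p x < Vfun ξmax f w c B p B) := by
  have hwc : (0:ℝ) < w - c := by linarith
  set V := Vfun ξmax f w c B p with hVdef
  set g : ℝ → ℝ := fun u => (p - c) - (w - c) * (1 - Ffun f (B - u)) with hgdef
  have hgc : Continuous g := by
    apply Continuous.sub continuous_const
    exact continuous_const.mul (continuous_const.sub
      ((Ffun_continuous f hfc).comp (continuous_const.sub continuous_id)))
  have hVd : ∀ x : ℝ, HasDerivAt V (g x) x := fun x =>
    Vfun_hasDerivAt ξmax f hfc hnorm w c B p x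
  have hVdiff : ∀ a b : ℝ, (∫ u in a..b, g u) = V b - V a := fun a b =>
    intervalIntegral.integral_eq_sub_of_hasDerivAt (fun x _ => hVd x)
      (hgc.intervalIntegrable a b)
  have hFmono := Ffun_mono f hfc hfnn
  have hganti : ∀ u v : ℝ, u ≤ v → g v ≤ g u := by
    intro u v huv
    have h1 : Ffun f (B - v) ≤ Ffun f (B - u) := hFmono (by linarith)
    simp only [hgdef]
    nlinarith
  refine ⟨?_, ?_, ?_⟩
  · -- case (i)
    intro hp x hx hx0
    have hx0' : 0 < x := lt_of_le_of_ne hx.1 (Ne.symm hx0)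
    have hg0 : g 0 < 0 := by simp only [hgdef, sub_zero]; linarith
    have hle : ∫ u in (0:ℝ)..x, g u ≤ ∫ u in (0:ℝ)..x, g 0 := by
      apply intervalIntegral.integral_mono_on hx0'.le (hgc.intervalIntegrable _ _)
        (intervalIntegrable_const)
      exact fun u hu => hganti 0 u hu.1
    rw [intervalIntegral.integral_const, smul_eq_mul] at hle
    have hVx := hVdiff 0 x
    nlinarith
  · -- case (ii)
    intro hp1 hp2
    set r : ℝ := (w - p) / (w - c) with hrdef
    have hr0 : 0 ≤ r := div_nonneg (by linarith) hwc.le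
    have hF0 : Ffun f 0 = 0 := intervalIntegral.integral_same
    have hrB : r ≤ Ffun f B := by
      rw [hrdef, div_le_iff₀ hwc]; nlinarith
    have hIVT : Set.Icc (Ffun f 0) (Ffun f B) ⊆ Ffun f '' Set.Icc 0 B :=
      intermediate_value_Icc hB0.le (Ffun_continuous f hfc).continuousOn
    obtain ⟨tstar, htmem, htF⟩ := hIVT ⟨by rw [hF0]; exact hr0, hrB⟩
    have htmem' : tstar ∈ Set.Icc (0:ℝ) ξmax := ⟨htmem.1, le_trans htmem.2 hBξ⟩
    refine ⟨tstar, htmem', htF, ?_, ?_⟩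
    · intro t ht htF'
      by_contra hne
      rcases lt_or_gt_of_ne hne with h | h
      · have := Ffun_strict ξmax f hfc hfpos ht.1 htmem'.2 h
        rw [htF, htF'] at this; exact lt_irrefl _ this
      · have := Ffun_strict ξmax f hfc hfpos htmem'.1 ht.2 h
        rw [htF, htF'] at this; exact lt_irrefl _ this
    · intro x hx
      set xs : ℝ := B - tstar with hxsdef
      have hgxs : g xs = 0 := by
        simp only [hgdef, hxsdef, sub_sub_cancel, htF, hrdef]
        field_simp
        ring
      rcases le_total x xs with h | h
      · have hnn : 0 ≤ ∫ u in x..xs, g u := by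
          apply intervalIntegral.integral_nonneg h
          intro u hu
          have := hganti u xs hu.2
          linarith [hgxs ▸ this]
        have := hVdiff x xs
        linarith
      · have hnp : ∫ u in xs..x, g u ≤ 0 := by
          have : ∫ u in xs..x, g u ≤ ∫ u in xs..x, (0:ℝ) := by
            apply intervalIntegral.integral_mono_on h (hgc.intervalIntegrable _ _)
              (intervalIntegrable_const)
            intro u hu
            have := hganti xs u hu.1
            linarith [hgxs ▸ this]
          simpa using this
        have := hVdiff xs x
        linarith
  · -- case (iii)
    intro hp x hx hxB
    have hxB' : x < B := lt_of_le_of_ne hx.2 hxB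
    have hglb : ∀ u ∈ Set.Icc x B, p - w ≤ g u := by
      intro u hu
      have h1 : 0 ≤ Ffun f (B - u) := by
        have hF0 : Ffun f 0 = 0 := intervalIntegral.integral_same
        have := hFmono (show (0:ℝ) ≤ B - u by linarith [hu.2])
        linarith
      simp only [hgdef]
      nlinarith
    have hle : ∫ u in x..B, (p - w) ≤ ∫ u in x..B, g u :=
      intervalIntegral.integral_mono_on hxB'.le intervalIntegrable_const
        (hgc.intervalIntegrable _ _) hglb
    rw [intervalIntegral.integral_const, smul_eq_mul] at hle
    have hVx := hVdiff x B
    nlinarith
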